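/- The ring 𝓡 = ℂ[s,A,B,C,D,E]/I_{sE} is an integral domain. -/

import Mathlib

open MvPolynomial

/-- Variables: `s = X 0`, `A = X 1`, `B = X 2`, `C = X 3`, `D = X 4`, `E = X 5`. -/
noncomputable def n₁ : MvPolynomial (Fin 6) ℂ :=
  ((X 1) ^ 2 + (X 0) ^ 5 * (X 5) ^ 5) * (X 1) ^ 2 - X 2 * X 3

noncomputable def n₂ : MvPolynomial (Fin 6) ℂ :=
  ((X 1) ^ 2 + (X 0) ^ 5 * (X 5) ^ 5) * ((X 2) ^ 2 - X 4) - X 3 * X 4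

noncomputable def n₃ : MvPolynomial (Fin 6) ℂ :=
  X 2 * ((X 2) ^ 2 - X 4) - (X 1) ^ 2 * X 4

/-- The ideal generated by the three 2×2 minors of
`[[A² + s⁵E⁵, B, D], [C, A², B² − D]]`. -/
noncomputable def I_sE : Ideal (MvPolynomial (Fin 6) ℂ) :=
  Ideal.span {n₁, n₂, n₃}

noncomputable section Aux

abbrev Qp := MvPolynomial (Fin 3) ℂ
abbrev Pp := MvPolynomial (Fin 6) ℂ

def gmap : Fin 3 → Fin 6 := ![0, 1, 5]

def lam : Qp →+* Pp := (MvPolynomial.rename gmap).toRingHom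

noncomputable instance : Algebra Qp Pp := lam.toAlgebra

lemma lam_X0 : lam (X 0) = (X 0 : Pp) := by simp [lam, gmap]
lemma lam_X1 : lam (X 1) = (X 1 : Pp) := by simp [lam, gmap]
lemma lam_X2 : lam (X 2) = (X 5 : Pp) := by simp [lam, gmap]

lemma algebraMap_eq_lam : algebraMap Qp Pp = lam := rfl

-- scalars
def qf0 : Qp := (X 1) ^ 2 + (X 0) ^ 5 * (X 2) ^ 5
def qA2 : Qp := (X 1) ^ 2
def qf : Qp := qf0 * qA2

lemma lam_qf0 : lam qf0 = ((X 1 : Pp) ^ 2 + (X 0) ^ 5 * (X 5) ^ 5) := by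
  simp [qf0, lam, gmap]
lemma lam_qA2 : lam qA2 = ((X 1 : Pp) ^ 2) := by simp [qA2, lam, gmap]
lemma lam_qf : lam qf = ((X 1 : Pp) ^ 2 + (X 0) ^ 5 * (X 5) ^ 5) * (X 1) ^ 2 := by
  simp [qf, map_mul, lam_qf0, lam_qA2]

end Aux

noncomputable section LemA

def MM : Submodule Qp Pp :=
  (LinearMap.range (Polynomial.aeval (X 2 : Pp)).toLinearMap ⊔
   LinearMap.range (Polynomial.aeval (X 3 : Pp)).toLinearMap) ⊔
  (LinearMap.range (Polynomial.aeval (X 4 : Pp)).toLinearMap ⊔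
   Submodule.restrictScalars Qp (I_sE : Submodule Pp Pp))

lemma hI_MM {x : Pp} (hx : x ∈ I_sE) : x ∈ MM :=
  le_sup_right (α := Submodule Qp Pp) (le_sup_right (α := Submodule Qp Pp) hx)

lemma hNB_MM (pa : Polynomial Qp) : (Polynomial.aeval (X 2 : Pp) pa) ∈ MM :=
  le_sup_left (α := Submodule Qp Pp) (le_sup_left (α := Submodule Qp Pp) ⟨pa, rfl⟩)

lemma hNC_MM (pb : Polynomial Qp) : (Polynomial.aeval (X 3 : Pp) pb) ∈ MM :=
  le_sup_left (α := Submodule Qp Pp) (le_sup_right (α := Submodule Qp Pp) ⟨pb, rfl⟩)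

lemma hND_MM (pc : Polynomial Qp) : (Polynomial.aeval (X 4 : Pp) pc) ∈ MM :=
  le_sup_right (α := Submodule Qp Pp) (le_sup_left (α := Submodule Qp Pp) ⟨pc, rfl⟩)

lemma hB_MM (k : ℕ) : ((X 2 : Pp) ^ k) ∈ MM := by
  have h := hNB_MM (Polynomial.X ^ k); rwa [map_pow, Polynomial.aeval_X] at h
lemma hC_MM (k : ℕ) : ((X 3 : Pp) ^ k) ∈ MM := by
  have h := hNC_MM (Polynomial.X ^ k); rwa [map_pow, Polynomial.aeval_X] at h
lemma hD_MM (k : ℕ) : ((X 4 : Pp) ^ k) ∈ MM := by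
  have h := hND_MM (Polynomial.X ^ k); rwa [map_pow, Polynomial.aeval_X] at h

lemma hsmul_MM (q : Qp) {x : Pp} (h : x ∈ MM) : lam q * x ∈ MM := by
  rw [show lam q * x = q • x from (Algebra.smul_def q x).symm]
  exact MM.smul_mem q h

lemma n₁_mem : n₁ ∈ I_sE := Ideal.subset_span (by simp)
lemma n₂_mem : n₂ ∈ I_sE := Ideal.subset_span (by simp)
lemma n₃_mem : n₃ ∈ I_sE := Ideal.subset_span (by simp)

lemma L_BC : ∀ k j : ℕ, (X 2 : Pp) ^ j * (X 3) ^ k ∈ MM := by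
  intro k
  induction k with
  | zero => intro j; simpa using hB_MM j
  | succ k ih =>
    intro j
    match j with
    | 0 => simpa using hC_MM (k + 1)
    | j + 1 =>
      have key : (X 2 : Pp) ^ (j + 1) * (X 3) ^ (k + 1) =
          lam qf * ((X 2 : Pp) ^ j * (X 3) ^ k) - ((X 2 : Pp) ^ j * (X 3) ^ k) * n₁ := by
        rw [lam_qf, n₁]; ring
      rw [key]
      exact MM.sub_mem (hsmul_MM _ (ih j)) (hI_MM (I_sE.mul_mem_left _ n₁_mem))

lemma L_BD : ∀ k j : ℕ, (X 2 : Pp) ^ j * (X 4) ^ k ∈ MM := by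
  intro k
  induction k with
  | zero => intro j; simpa using hB_MM j
  | succ k ih =>
    intro j
    induction j with
    | zero => simpa using hD_MM (k + 1)
    | succ j ihj =>
      have key : (X 2 : Pp) ^ (j + 1) * (X 4) ^ (k + 1) =
          (X 2 : Pp) ^ (j + 3) * (X 4) ^ k - lam qA2 * ((X 2 : Pp) ^ j * (X 4) ^ (k + 1))
            - ((X 2 : Pp) ^ j * (X 4) ^ k) * n₃ := by
        rw [lam_qA2, n₃]; ring
      rw [key]
      exact MM.sub_mem (MM.sub_mem (ih (j + 3)) (hsmul_MM _ ihj))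
        (hI_MM (I_sE.mul_mem_left _ n₃_mem))

lemma L_CD : ∀ k : ℕ, (X 3 : Pp) ^ k * (X 4) ∈ MM := by
  intro k
  induction k with
  | zero => simpa using hD_MM 1
  | succ k ih =>
    have key : (X 3 : Pp) ^ (k + 1) * (X 4) =
        lam qf0 * ((X 2 : Pp) ^ 2 * (X 3) ^ k) - lam qf0 * ((X 3 : Pp) ^ k * (X 4))
          - (X 3 : Pp) ^ k * n₂ := by
      rw [lam_qf0, n₂]; ring
    rw [key]
    exact MM.sub_mem (MM.sub_mem (hsmul_MM _ (L_BC k 2)) (hsmul_MM _ ih))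
      (hI_MM (I_sE.mul_mem_left _ n₂_mem))

lemma L_DC : ∀ k : ℕ, (X 4 : Pp) ^ k * (X 3) ∈ MM := by
  intro k
  match k with
  | 0 => simpa using hC_MM 1
  | k + 1 =>
    have key : (X 4 : Pp) ^ (k + 1) * (X 3) =
        lam qf0 * ((X 2 : Pp) ^ 2 * (X 4) ^ k) - lam qf0 * ((X 2 : Pp) ^ 0 * (X 4) ^ (k + 1))
          - (X 4 : Pp) ^ k * n₂ := by
      rw [lam_qf0, n₂]; ring
    rw [key]
    exact MM.sub_mem (MM.sub_mem (hsmul_MM _ (L_BD k 2)) (hsmul_MM _ (L_BD (k + 1) 0)))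
      (hI_MM (I_sE.mul_mem_left _ n₂_mem))

end LemA

noncomputable section LemA2

lemma aeval_mul_mem {t : Pp} {i : Fin 6} (hmono : ∀ k : ℕ, t ^ k * X i ∈ MM) :
    ∀ pa : Polynomial Qp, (Polynomial.aeval t pa : Pp) * X i ∈ MM := by
  intro pa
  induction pa using Polynomial.induction_on' with
  | add p q hp hq => rw [map_add, add_mul]; exact MM.add_mem hp hq
  | monomial n a =>
    rw [Polynomial.aeval_monomial, algebraMap_eq_lam, mul_assoc]
    exact hsmul_MM a (hmono n)

lemma mulX_MM : ∀ (i : Fin 6) (p : Pp), p ∈ MM → p * X i ∈ MM := by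
  intro i p hp
  by_cases hi : i = 0 ∨ i = 1 ∨ i = 5
  · obtain hi | hi | hi := hi
    · subst hi; rw [mul_comm, ← lam_X0]; exact hsmul_MM _ hp
    · subst hi; rw [mul_comm, ← lam_X1]; exact hsmul_MM _ hp
    · subst hi; rw [mul_comm, ← lam_X2]; exact hsmul_MM _ hp
  · rcases Submodule.mem_sup.mp hp with ⟨x, hx, y, hy, rfl⟩
    rcases Submodule.mem_sup.mp hx with ⟨xb, hxb, xc, hxc, rfl⟩
    rcases Submodule.mem_sup.mp hy with ⟨xd, hxd, xi, hxi, rfl⟩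
    rcases hxb with ⟨pa, rfl⟩
    rcases hxc with ⟨pb, rfl⟩
    rcases hxd with ⟨pc, rfl⟩
    have hxiI : (xi : Pp) ∈ I_sE := hxi
    have hii : i = 2 ∨ i = 3 ∨ i = 4 := by fin_cases i <;> simp_all
    rw [add_mul, add_mul, add_mul]
    refine MM.add_mem (MM.add_mem ?_ ?_) (MM.add_mem ?_ (hI_MM (I_sE.mul_mem_right _ hxiI)))
    · refine aeval_mul_mem (fun k => ?_) pa
      obtain hi2 | hi2 | hi2 := hii <;> subst hi2
      · rw [show (X 2 : Pp) ^ k * X 2 = X 2 ^ (k + 1) by ring]; exact hB_MM _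
      · have := L_BC 1 k; rwa [pow_one] at this
      · have := L_BD 1 k; rwa [pow_one] at this
    · refine aeval_mul_mem (fun k => ?_) pb
      obtain hi2 | hi2 | hi2 := hii <;> subst hi2
      · have := L_BC k 1; rwa [pow_one, mul_comm] at this
      · rw [show (X 3 : Pp) ^ k * X 3 = X 3 ^ (k + 1) by ring]; exact hC_MM _
      · exact L_CD k
    · refine aeval_mul_mem (fun k => ?_) pc
      obtain hi2 | hi2 | hi2 := hii <;> subst hi2
      · have := L_BD k 1; rwa [pow_one, mul_comm] at this
      · exact L_DC k
      · rw [show (X 4 : Pp) ^ k * X 4 = X 4 ^ (k + 1) by ring]; exact hD_MM _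

lemma all_mem_MM : ∀ p : Pp, p ∈ MM := by
  intro p
  induction p using MvPolynomial.induction_on with
  | C a =>
    have h := hNB_MM (Polynomial.C (MvPolynomial.C a))
    rwa [Polynomial.aeval_C, algebraMap_eq_lam, show lam (MvPolynomial.C a) = MvPolynomial.C a
      from by simp [lam]] at h
  | add p q hp hq => exact MM.add_mem hp hq
  | mul_X p n hp => exact mulX_MM n p hp

end LemA2

set_option synthInstance.maxHeartbeats 1000000

noncomputable section PsiDef

abbrev Kf := FractionRing Qp

instance instFieldKf : Field Kf := inferInstance

abbrev Ff := RatFunc Kf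

instance instFieldFf : Field Ff := inferInstance
instance instCommSemiringFf : CommSemiring Ff := inferInstance

def kap : Qp →+* Kf := algebraMap Qp Kf
def cst : Qp →+* Ff := (algebraMap Kf Ff).comp kap

def XF : Ff := RatFunc.X

def vF : Fin 6 → Ff :=
  ![cst (X 0), cst (X 1), XF, cst qf / XF, XF ^ 3 / (XF + cst qA2), cst (X 2)]

def psi : Pp →+* Ff := MvPolynomial.eval₂Hom (cst.comp (MvPolynomial.C)) vF

lemma psi_X0 : psi (X 0) = cst (X 0) := by simp [psi, vF]
lemma psi_X1 : psi (X 1) = cst (X 1) := by simp [psi, vF]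
lemma psi_X5 : psi (X 5) = cst (X 2) := by simp [psi, vF]
lemma psi_B : psi (X 2) = XF := by simp [psi, vF]
lemma psi_C : psi (X 3) = cst qf / XF := by simp [psi, vF]
lemma psi_D : psi (X 4) = XF ^ 3 / (XF + cst qA2) := by simp [psi, vF]

lemma hXF_ne : XF ≠ 0 := RatFunc.X_ne_zero

lemma psi_comp_lam : psi.comp lam = cst := by
  apply MvPolynomial.ringHom_ext
  · intro a; simp [lam, psi]
  · intro i
    fin_cases i <;> simp [lam, gmap, psi, vF] <;> rfl

end PsiDef

noncomputable section PsiKer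

lemma cst_eq (q : Qp) : cst q = algebraMap Kf Ff (kap q) := rfl

lemma XF_add_eq (a : Kf) :
    XF + algebraMap Kf Ff a = algebraMap (Polynomial Kf) Ff (Polynomial.X + Polynomial.C a) := by
  rw [map_add, RatFunc.algebraMap_X, RatFunc.algebraMap_C]
  rfl

lemma hpi_ne (a : Kf) : XF + algebraMap Kf Ff a ≠ 0 := by
  rw [XF_add_eq]
  exact RatFunc.algebraMap_ne_zero (Polynomial.X_add_C_ne_zero a)

lemma hpiA_ne : XF + cst qA2 ≠ 0 := by rw [cst_eq]; exact hpi_ne _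

lemma cst_qf_eq : cst qf = (cst (X 1) ^ 2 + cst (X 0) ^ 5 * cst (X 2) ^ 5) * cst (X 1) ^ 2 := by
  simp [qf, qf0, qA2, map_mul, map_add, map_pow]

lemma cst_qA2_eq : cst qA2 = cst (X 1) ^ 2 := by simp [qA2, map_pow]

lemma psi_n1 : psi n₁ = 0 := by
  simp only [n₁, map_sub, map_add, map_mul, map_pow, psi_X0, psi_X1, psi_X5, psi_B, psi_C]
  rw [cst_qf_eq]
  have h1 : XF ≠ 0 := hXF_ne
  field_simp
  ring

lemma psi_n2 : psi n₂ = 0 := by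
  simp only [n₂, map_sub, map_add, map_mul, map_pow, psi_X0, psi_X1, psi_X5, psi_B, psi_C, psi_D]
  rw [cst_qf_eq, cst_qA2_eq] at *
  have h1 : XF ≠ 0 := hXF_ne
  have h2 : XF + cst (X 1) ^ 2 ≠ 0 := by rw [← cst_qA2_eq]; exact hpiA_ne
  field_simp
  ring

lemma psi_n3 : psi n₃ = 0 := by
  simp only [n₃, map_sub, map_add, map_mul, map_pow, psi_X1, psi_B, psi_D]
  rw [cst_qA2_eq]
  have h2 : XF + cst (X 1) ^ 2 ≠ 0 := by rw [← cst_qA2_eq]; exact hpiA_ne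
  field_simp
  ring

lemma I_le_ker : I_sE ≤ RingHom.ker psi := by
  rw [I_sE, Ideal.span_le]
  rintro x (rfl | rfl | rfl)
  · exact psi_n1
  · exact psi_n2
  · exact psi_n3

end PsiKer

noncomputable section Inj

def emb : Polynomial Kf →+* Ff := algebraMap (Polynomial Kf) Ff

lemma psi_aeval (t : Pp) (p : Polynomial Qp) :
    psi (Polynomial.aeval t p) = Polynomial.eval₂ (algebraMap Kf Ff) (psi t) (p.map kap) := by
  rw [Polynomial.aeval_def, Polynomial.hom_eval₂, Polynomial.eval₂_map]
  congr 1
  rw [show (algebraMap Qp Pp) = lam from rfl, psi_comp_lam]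
  rfl

lemma eval₂_X_emb (q : Polynomial Kf) :
    Polynomial.eval₂ (algebraMap Kf Ff) XF q = emb q := by
  have : Polynomial.eval₂RingHom (algebraMap Kf Ff) XF = emb := by
    apply Polynomial.ringHom_ext
    · intro a
      simp [emb, RatFunc.algebraMap_C]
    · simp [emb, RatFunc.algebraMap_X, XF]
  rw [← this]
  rfl

lemma kap_inj : Function.Injective kap := IsFractionRing.injective Qp Kf

lemma emb_inj : Function.Injective emb := RatFunc.algebraMap_injective Kf

end Inj

noncomputable section Inj2

lemma term_b (b gv : Kf) (j J : ℕ) (hj : j ≤ J) :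
    algebraMap Kf Ff (b * gv ^ j) * XF ^ (J - j)
      = algebraMap Kf Ff b * (algebraMap Kf Ff gv / XF) ^ j * XF ^ J := by
  obtain ⟨m, rfl⟩ : ∃ m, J = m + j := ⟨J - j, (Nat.sub_add_cancel hj).symm⟩
  have hm : m + j - j = m := by omega
  rw [hm, pow_add, div_pow, map_mul, map_pow]
  have hX : XF ^ j ≠ 0 := pow_ne_zero _ hXF_ne
  field_simp

lemma term_c (c av : Kf) (k Kd J : ℕ) (hk : k ≤ Kd) :
    algebraMap Kf Ff c * XF ^ (3 * k + J) * (XF + algebraMap Kf Ff av) ^ (Kd - k)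
      = algebraMap Kf Ff c * (XF ^ 3 / (XF + algebraMap Kf Ff av)) ^ k
          * (XF ^ J * (XF + algebraMap Kf Ff av) ^ Kd) := by
  obtain ⟨m, rfl⟩ : ∃ m, Kd = m + k := ⟨Kd - k, (Nat.sub_add_cancel hk).symm⟩
  have hm : m + k - k = m := by omega
  have hpi : (XF + algebraMap Kf Ff av) ≠ 0 := hpi_ne av
  have hpik : (XF + algebraMap Kf Ff av) ^ k ≠ 0 := pow_ne_zero _ hpi
  rw [hm, pow_add XF (3 * k) J, pow_mul XF 3 k, pow_add (XF + algebraMap Kf Ff av) m k, div_pow]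
  field_simp

end Inj2

noncomputable section Inj3

lemma qA2_ne : (qA2 : Qp) ≠ 0 := pow_ne_zero _ (MvPolynomial.X_ne_zero 1)
lemma qf0_ne : (qf0 : Qp) ≠ 0 := by
  intro h
  have h2 := congrArg (MvPolynomial.eval (fun _ => (1 : ℂ))) h
  simp [qf0] at h2

lemma qf_ne : (qf : Qp) ≠ 0 := mul_ne_zero qf0_ne qA2_ne

set_option maxHeartbeats 2000000 in
lemma inj_normal (pa pb pc : Polynomial Qp)
    (h : psi (Polynomial.aeval (X 2 : Pp) pa + Polynomial.aeval (X 3 : Pp) pb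
      + Polynomial.aeval (X 4 : Pp) pc) = 0) :
    Polynomial.aeval (X 2 : Pp) pa + Polynomial.aeval (X 3 : Pp) pb
      + Polynomial.aeval (X 4 : Pp) pc = 0 := by
  set qa : Polynomial Kf := pa.map kap with hqa_def
  set qb : Polynomial Kf := pb.map kap with hqb_def
  set qc : Polynomial Kf := pc.map kap with hqc_def
  set gv : Kf := kap qf with hgv_def
  set av : Kf := kap qA2 with hav_def
  have hgv : gv ≠ 0 := fun hh => qf_ne (kap_inj (by simpa using hh))
  have hav : av ≠ 0 := fun hh => qA2_ne (kap_inj (by simpa using hh))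
  set J : ℕ := qb.natDegree with hJ_def
  set Kd : ℕ := qc.natDegree with hKd_def
  set Pip : Polynomial Kf := Polynomial.X + Polynomial.C av with hPip_def
  set piF : Ff := XF + algebraMap Kf Ff av with hpiF_def
  have hembPi : emb Pip = piF := by
    rw [hpiF_def, XF_add_eq]; rfl
  set bp : Polynomial Kf := qb.sum fun j b => Polynomial.C (b * gv ^ j) * Polynomial.X ^ (J - j)
    with hbp_def
  set zp : Polynomial Kf := qc.sum fun k c =>
      Polynomial.C c * Polynomial.X ^ (3 * k + J) * Pip ^ (Kd - k) with hzp_def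
  set Gp : Polynomial Kf := qa * Polynomial.X ^ J * Pip ^ Kd + bp * Pip ^ Kd + zp with hGp_def
  -- piece computations
  have hembqa : emb qa = psi (Polynomial.aeval (X 2 : Pp) pa) := by
    rw [psi_aeval, psi_B, eval₂_X_emb, hqa_def]
  have hT2 : emb bp = psi (Polynomial.aeval (X 3 : Pp) pb) * XF ^ J := by
    rw [psi_aeval, psi_C, Polynomial.eval₂_eq_sum, hbp_def, Polynomial.sum_def,
      Polynomial.sum_def, map_sum, Finset.sum_mul]
    refine Finset.sum_congr rfl fun j hj => ?_
    have hjle : j ≤ J := Polynomial.le_natDegree_of_mem_supp j hj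
    rw [map_mul, map_pow, show emb (Polynomial.C (qb.coeff j * gv ^ j))
        = algebraMap Kf Ff (qb.coeff j * gv ^ j) from rfl,
      show emb Polynomial.X = XF from rfl]
    rw [show cst qf = algebraMap Kf Ff gv from rfl]
    exact term_b _ _ _ _ hjle
  have hT3 : emb zp = psi (Polynomial.aeval (X 4 : Pp) pc) * (XF ^ J * piF ^ Kd) := by
    rw [psi_aeval, psi_D, Polynomial.eval₂_eq_sum, hzp_def, Polynomial.sum_def,
      Polynomial.sum_def, map_sum, Finset.sum_mul]
    refine Finset.sum_congr rfl fun k hk => ?_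
    have hkle : k ≤ Kd := Polynomial.le_natDegree_of_mem_supp k hk
    rw [map_mul, map_mul, map_pow, map_pow, hembPi,
      show emb (Polynomial.C (qc.coeff k)) = algebraMap Kf Ff (qc.coeff k) from rfl,
      show emb Polynomial.X = XF from rfl]
    rw [show cst qA2 = algebraMap Kf Ff av from rfl, hpiF_def]
    exact term_c _ _ _ _ _ hkle
  have hGp0 : Gp = 0 := by
    apply emb_inj
    rw [map_zero, hGp_def]
    simp only [map_add, map_mul, map_pow]
    rw [hembPi, show emb Polynomial.X = XF from rfl, hembqa, hT2, hT3]
    have hpsum := h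
    rw [map_add, map_add] at hpsum
    calc psi (Polynomial.aeval (X 2 : Pp) pa) * XF ^ J * piF ^ Kd
          + psi (Polynomial.aeval (X 3 : Pp) pb) * XF ^ J * piF ^ Kd
          + psi (Polynomial.aeval (X 4 : Pp) pc) * (XF ^ J * piF ^ Kd)
        = (psi (Polynomial.aeval (X 2 : Pp) pa) + psi (Polynomial.aeval (X 3 : Pp) pb)
            + psi (Polynomial.aeval (X 4 : Pp) pc)) * (XF ^ J * piF ^ Kd) := by ring
      _ = 0 := by rw [hpsum, zero_mul]
  -- J = 0
  have hJ0 : J = 0 := by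
    by_contra hJ
    have hqb : qb ≠ 0 := fun hh => hJ (by rw [hJ_def, hh, Polynomial.natDegree_zero])
    have hbpe : bp.eval 0 = qb.coeff J * gv ^ J := by
      rw [hbp_def, Polynomial.sum_def, Polynomial.eval_finset_sum]
      rw [Finset.sum_eq_single J]
      · simp
      · intro j hj hne
        have hjle : j ≤ J := Polynomial.le_natDegree_of_mem_supp j hj
        have hd : J - j ≠ 0 := by omega
        simp [zero_pow hd]
      · intro hns
        rw [Polynomial.notMem_support_iff.mp hns]
        simp
    have hzpe : zp.eval 0 = 0 := by
      rw [hzp_def, Polynomial.sum_def, Polynomial.eval_finset_sum]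
      apply Finset.sum_eq_zero
      intro k hk
      have hd : 3 * k + J ≠ 0 := by omega
      simp [zero_pow hd]
    have e1 : Polynomial.eval 0 Gp = qb.coeff J * gv ^ J * av ^ Kd := by
      rw [hGp_def]
      simp only [Polynomial.eval_add, Polynomial.eval_mul, Polynomial.eval_pow, hPip_def,
        Polynomial.eval_X, Polynomial.eval_C]
      rw [hbpe, hzpe, zero_pow hJ]
      ring
    rw [hGp0, Polynomial.eval_zero] at e1
    have hc0 : qb.coeff J = 0 := by
      rcases mul_eq_zero.mp e1.symm with h1 | h2
      · rcases mul_eq_zero.mp h1 with h3 | h4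
        · exact h3
        · exact absurd h4 (pow_ne_zero _ hgv)
      · exact absurd h2 (pow_ne_zero _ hav)
    exact Polynomial.leadingCoeff_ne_zero.mpr hqb hc0
  -- Kd = 0
  have hKd0 : Kd = 0 := by
    by_contra hKd
    have hqc : qc ≠ 0 := fun hh => hKd (by rw [hKd_def, hh, Polynomial.natDegree_zero])
    have hPie : Pip.eval (-av) = 0 := by
      rw [hPip_def, Polynomial.eval_add, Polynomial.eval_X, Polynomial.eval_C]; ring
    have hzpe : zp.eval (-av) = qc.coeff Kd * (-av) ^ (3 * Kd + J) := by
      rw [hzp_def, Polynomial.sum_def, Polynomial.eval_finset_sum]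
      rw [Finset.sum_eq_single Kd]
      · simp [hPie]
      · intro k hk hne
        have hkle : k ≤ Kd := Polynomial.le_natDegree_of_mem_supp k hk
        have hd : Kd - k ≠ 0 := by omega
        simp [hPie, zero_pow hd]
      · intro hns
        rw [Polynomial.notMem_support_iff.mp hns]
        simp
    have e1 : Polynomial.eval (-av) Gp = qc.coeff Kd * (-av) ^ (3 * Kd + J) := by
      rw [hGp_def]
      simp only [Polynomial.eval_add, Polynomial.eval_mul, Polynomial.eval_pow]
      rw [hPie, hzpe, zero_pow hKd]
      ring
    rw [hGp0, Polynomial.eval_zero] at e1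
    have hc0 : qc.coeff Kd = 0 := by
      rcases mul_eq_zero.mp e1.symm with h1 | h2
      · exact h1
      · exact absurd h2 (pow_ne_zero _ (neg_ne_zero.mpr hav))
    exact Polynomial.leadingCoeff_ne_zero.mpr hqc hc0
  -- conclude pb, pc are constants
  have hpbdeg : pb.natDegree = 0 := by
    rw [← Polynomial.natDegree_map_eq_of_injective kap_inj pb]; exact hJ0
  have hpcdeg : pc.natDegree = 0 := by
    rw [← Polynomial.natDegree_map_eq_of_injective kap_inj pc]; exact hKd0
  have hpb : pb = Polynomial.C (pb.coeff 0) := Polynomial.eq_C_of_natDegree_eq_zero hpbdeg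
  have hpc : pc = Polynomial.C (pc.coeff 0) := Polynomial.eq_C_of_natDegree_eq_zero hpcdeg
  have hcollapse : Polynomial.aeval (X 2 : Pp) pa + Polynomial.aeval (X 3 : Pp) pb
      + Polynomial.aeval (X 4 : Pp) pc
      = Polynomial.aeval (X 2 : Pp) (pa + Polynomial.C (pb.coeff 0) + Polynomial.C (pc.coeff 0)) := by
    rw [map_add, map_add, Polynomial.aeval_C, Polynomial.aeval_C]
    nth_rewrite 1 [hpb]
    nth_rewrite 1 [hpc]
    rw [Polynomial.aeval_C, Polynomial.aeval_C]
  rw [hcollapse] at h ⊢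
  have hz : (pa + Polynomial.C (pb.coeff 0) + Polynomial.C (pc.coeff 0)).map kap = 0 := by
    apply emb_inj
    rw [map_zero, ← eval₂_X_emb, ← psi_B, ← psi_aeval]
    exact h
  have hz2 : pa + Polynomial.C (pb.coeff 0) + Polynomial.C (pc.coeff 0) = 0 :=
    Polynomial.map_injective kap kap_inj (by rw [hz, Polynomial.map_zero])
  rw [hz2, map_zero]

end Inj3

noncomputable section Final

lemma I_eq_ker : I_sE = RingHom.ker psi := by
  apply le_antisymm I_le_ker
  intro p hp
  have hp0 : psi p = 0 := hp
  have hmm := all_mem_MM p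
  rcases Submodule.mem_sup.mp hmm with ⟨x, hx, y, hy, rfl⟩
  rcases Submodule.mem_sup.mp hx with ⟨xb, hxb, xc, hxc, rfl⟩
  rcases Submodule.mem_sup.mp hy with ⟨xd, hxd, xi, hxi, rfl⟩
  rcases hxb with ⟨pa, rfl⟩
  rcases hxc with ⟨pb, rfl⟩
  rcases hxd with ⟨pc, rfl⟩
  have hxiI : (xi : Pp) ∈ I_sE := hxi
  have hxi0 : psi xi = 0 := I_le_ker hxiI
  simp only [AlgHom.toLinearMap_apply] at hp0 ⊢
  have hn : Polynomial.aeval (X 2 : Pp) pa + Polynomial.aeval (X 3 : Pp) pb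
      + Polynomial.aeval (X 4 : Pp) pc = 0 := by
    apply inj_normal
    have heq : Polynomial.aeval (X 2 : Pp) pa + Polynomial.aeval (X 3 : Pp) pb
        + Polynomial.aeval (X 4 : Pp) pc
        = ((Polynomial.aeval (X 2 : Pp) pa + Polynomial.aeval (X 3 : Pp) pb)
            + (Polynomial.aeval (X 4 : Pp) pc + xi)) - xi := by ring
    rw [heq, map_sub, hp0, hxi0, sub_zero]
  have hsplit : (Polynomial.aeval (X 2 : Pp) pa + Polynomial.aeval (X 3 : Pp) pb)
      + (Polynomial.aeval (X 4 : Pp) pc + xi)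
      = (Polynomial.aeval (X 2 : Pp) pa + Polynomial.aeval (X 3 : Pp) pb
          + Polynomial.aeval (X 4 : Pp) pc) + xi := by ring
  rw [hsplit, hn, zero_add]
  exact hxiI

end Final

/-- The ring `𝓡 = ℂ[s,A,B,C,D,E]/I_{sE}` is an integral domain. -/
theorem stmt_14 : IsDomain (MvPolynomial (Fin 6) ℂ ⧸ I_sE) := by
  have hprime : I_sE.IsPrime := by
    rw [I_eq_ker]
    exact RingHom.ker_isPrime psi
  haveI := hprime
  exact Ideal.Quotient.isDomain I_sE
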